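/- Let d be prime and n ≥ 2. Define the game matrix Φ_k (for k ∈ {1,…,d−1}) as the d × d^{n−1} matrix with entries Φ_k[x₁; (x₂,…,x_n)] = (1/d^n) · ζ^{k · Σ_{i<j} x_i x_j}, where ζ = e^{2πi/d} and x_i range over ℤ_d. Then Φ_k Φ_k† = (1/d^{n+1}) I_d, and hence the maximum singular value of Φ_k equals 1/√(d^{n+1}). -/

import Mathlib

open Matrix Finset

/-- `ζ^a` where `ζ = e^{2πi/d}` and `a ∈ ℤ_d`. -/
noncomputable def zetaPow (d : ℕ) (a : ZMod d) : ℂ :=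
  Complex.exp (2 * Real.pi * Complex.I * (a.val : ℂ) / (d : ℂ))

/-- The operator norm (maximum singular value) of a complex matrix. -/
noncomputable def matOpNorm {m n : Type*} [Fintype m] [Fintype n] [DecidableEq n]
    (A : Matrix m n ℂ) : ℝ :=
  ‖LinearMap.toContinuousLinearMap (Matrix.toEuclideanLin A)‖

/-- The `d × d^{n-1}` game matrix of the `n`-party CHSH-`d` game:
`Φ_k[x₁; (x₂,…,x_n)] = (1/d^n)·ζ^{k·Σ_{i<j} x_i x_j}`. -/
noncomputable def PhiCHSH (d n : ℕ) [NeZero d] (k : ZMod d) :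
    Matrix (ZMod d) (Fin (n - 1) → ZMod d) ℂ :=
  Matrix.of fun x v =>
    let xs : Fin n → ZMod d := fun i =>
      if h : (i : ℕ) = 0 then x else v ⟨(i : ℕ) - 1, by have := i.isLt; omega⟩
    ((1 : ℂ) / (d : ℂ) ^ n) *
      zetaPow d (k * ∑ i : Fin n, ∑ j : Fin n, if i < j then xs i * xs j else 0)



open scoped InnerProductSpace

noncomputable def zchar (d : ℕ) [NeZero d] : AddChar (ZMod d) ℂ :=
  AddChar.zmodChar d (Complex.isPrimitiveRoot_exp d (NeZero.ne d)).pow_eq_one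

lemma zetaPow_eq_zchar (d : ℕ) [NeZero d] (a : ZMod d) : zetaPow d a = zchar d a := by
  rw [zchar, AddChar.zmodChar_apply, zetaPow, ← Complex.exp_nat_mul]
  congr 1; field_simp

lemma zchar_map_sum {ι : Type*} (d : ℕ) [NeZero d] (s : Finset ι) (f : ι → ZMod d) :
    zchar d (∑ i ∈ s, f i) = ∏ i ∈ s, zchar d (f i) := by
  induction s using Finset.cons_induction with
  | empty => simp [AddChar.map_zero_eq_one]
  | cons a s h ih => simp [Finset.sum_cons, Finset.prod_cons, AddChar.map_add_eq_mul, ih]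

lemma conj_zchar (d : ℕ) [NeZero d] (a : ZMod d) :
    (starRingEnd ℂ) (zchar d a) = zchar d (-a) := by
  have h1 : zchar d a * zchar d (-a) = 1 := by
    rw [← AddChar.map_add_eq_mul]; simp [AddChar.map_zero_eq_one]
  have h2 : zchar d a * (starRingEnd ℂ) (zchar d a) = 1 := by
    rw [mul_comm, Complex.conj_mul']
    rw [← zetaPow_eq_zchar, zetaPow]
    have : (2 * Real.pi * Complex.I * ((a.val : ℕ) : ℂ) / (d : ℂ))
        = (((2 * Real.pi * a.val / d : ℝ)) : ℂ) * Complex.I := by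
      push_cast; ring
    rw [this]
    norm_cast
    rw [Complex.norm_exp_ofReal_mul_I]
    norm_num
  have h3 := h1.trans h2.symm
  have hne : zchar d a ≠ 0 := by intro h; rw [h] at h1; simp at h1
  exact (mul_left_cancel₀ hne h3).symm

lemma zchar_ne_one (d : ℕ) [NeZero d] (hd : 1 < d) : zchar d ≠ 1 := by
  intro h
  have h1 : zchar d 1 = 1 := by rw [h]; rfl
  rw [zchar, AddChar.zmodChar_apply, ZMod.val_one_eq_one_mod] at h1
  rw [Nat.mod_eq_of_lt hd, pow_one] at h1
  exact (Complex.isPrimitiveRoot_exp d (NeZero.ne d)).ne_one hd h1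

lemma sum_zchar_eq_zero (d : ℕ) [NeZero d] (hd : d.Prime) {c : ZMod d} (hc : c ≠ 0) :
    ∑ a : ZMod d, zchar d (c * a) = 0 := by
  haveI := Fact.mk hd
  have hbij : Function.Bijective (fun a : ZMod d => c * a) :=
    (Equiv.mulLeft₀ c hc).bijective
  have : ∑ a : ZMod d, zchar d (c * a) = ∑ a : ZMod d, zchar d a :=
    Fintype.sum_bijective _ hbij _ _ (fun a => rfl)
  rw [this]
  exact AddChar.sum_eq_zero_of_ne_one (zchar_ne_one d hd.one_lt)

def xsFun {d m : ℕ} (x : ZMod d) (v : Fin m → ZMod d) : Fin (m+1) → ZMod d :=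
  fun i => if h : (i : ℕ) = 0 then x else v ⟨(i : ℕ) - 1, by have := i.isLt; omega⟩

lemma xsFun_zero {d m : ℕ} (x : ZMod d) (v : Fin m → ZMod d) : xsFun x v 0 = x := rfl

lemma xsFun_succ {d m : ℕ} (x : ZMod d) (v : Fin m → ZMod d) (t : Fin m) :
    xsFun x v t.succ = v t := by
  simp only [xsFun, Fin.val_succ]
  rw [dif_neg (by omega)]
  congr 1

lemma S_split (d m : ℕ) [NeZero d] (x : ZMod d) (v : Fin m → ZMod d) :
    (∑ i : Fin (m+1), ∑ j : Fin (m+1), if i < j then xsFun x v i * xsFun x v j else 0)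
    = x * (∑ t, v t) + ∑ i : Fin m, ∑ j : Fin m, (if i < j then v i * v j else 0) := by
  rw [Fin.sum_univ_succ]
  congr 1
  · rw [Fin.sum_univ_succ]
    simp [xsFun_zero, xsFun_succ, Fin.succ_pos, mul_sum]
  · refine Finset.sum_congr rfl fun i _ => ?_
    rw [Fin.sum_univ_succ]
    simp [xsFun_succ, Fin.succ_lt_succ_iff]

lemma PhiCHSH_apply (d m : ℕ) [NeZero d] (k : ZMod d) (x : ZMod d)
    (v : Fin m → ZMod d) :
    PhiCHSH d (m+1) k x (v : Fin (m+1-1) → ZMod d) = ((1 : ℂ) / (d : ℂ) ^ (m+1)) *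
      zchar d (k * (x * (∑ t, v t)
        + ∑ i : Fin m, ∑ j : Fin m, (if i < j then v i * v j else 0))) := by
  rw [← S_split, ← zetaPow_eq_zchar]
  rfl

/-- For `d` prime and `n ≥ 2`, the CHSH game matrices satisfy
`Φ_k Φ_k† = (1/d^{n+1}) I_d`, hence `‖Φ_k‖ = 1/√(d^{n+1})`. -/
theorem chsh_game_matrix_norm (d n : ℕ) [NeZero d] (hd : d.Prime) (hn : 2 ≤ n)
    (k : ZMod d) (hk : k ≠ 0) :
    PhiCHSH d n k * (PhiCHSH d n k)ᴴ = ((1 : ℂ) / (d : ℂ) ^ (n + 1)) • 1 ∧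
    matOpNorm (PhiCHSH d n k) = 1 / Real.sqrt ((d : ℝ) ^ (n + 1)) := by
  haveI := Fact.mk hd
  obtain ⟨m, hm1, rfl⟩ : ∃ m, 1 ≤ m ∧ n = m + 1 := ⟨n - 1, by omega, by omega⟩
  have hdC : (d : ℂ) ≠ 0 := Nat.cast_ne_zero.mpr (NeZero.ne d)
  have h1 : PhiCHSH d (m+1) k * (PhiCHSH d (m+1) k)ᴴ
      = ((1 : ℂ) / (d : ℂ) ^ (m + 1 + 1)) • 1 := by
    ext x y
    rw [Matrix.mul_apply]
    have hterm : ∀ v : Fin m → ZMod d,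
        PhiCHSH d (m+1) k x v * (PhiCHSH d (m+1) k)ᴴ v y
        = ((1 : ℂ) / (d : ℂ) ^ (m+1))^2 * zchar d ((k * (x - y)) * (∑ t, v t)) := by
      intro v
      rw [Matrix.conjTranspose_apply, PhiCHSH_apply, PhiCHSH_apply, star_mul']
      rw [show star ((1 : ℂ) / (d : ℂ) ^ (m+1)) = (1 : ℂ) / (d : ℂ) ^ (m+1) by simp]
      rw [show star (zchar d (k * (y * (∑ t, v t)
          + ∑ i : Fin m, ∑ j : Fin m, (if i < j then v i * v j else 0))))
          = zchar d (-(k * (y * (∑ t, v t)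
          + ∑ i : Fin m, ∑ j : Fin m, (if i < j then v i * v j else 0)))) from
        conj_zchar d _]
      rw [mul_mul_mul_comm, ← AddChar.map_add_eq_mul, ← sq]
      congr 1
      ring
    have hsum1 : (∑ v : Fin (m+1-1) → ZMod d,
        PhiCHSH d (m+1) k x v * (PhiCHSH d (m+1) k)ᴴ v y)
        = ∑ v : Fin m → ZMod d,
          ((1 : ℂ) / (d : ℂ) ^ (m+1))^2 * zchar d ((k * (x - y)) * (∑ t, v t)) :=
      Finset.sum_congr rfl fun v _ => hterm v
    rw [hsum1, ← Finset.mul_sum]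
    by_cases hxy : x = y
    · subst hxy
      simp only [sub_self, mul_zero, zero_mul, AddChar.map_zero_eq_one]
      rw [Finset.sum_const, Finset.card_univ]
      simp only [Matrix.smul_apply, Matrix.one_apply_eq, smul_eq_mul, mul_one]
      have hcard : Fintype.card (Fin m → ZMod d) = d ^ m := by
        simp [Fintype.card_fun, ZMod.card]
      rw [hcard]
      field_simp
      ring
    · have hcne : k * (x - y) ≠ 0 := mul_ne_zero hk (sub_ne_zero.mpr hxy)
      have hsum : ∑ v : Fin m → ZMod d, zchar d ((k * (x - y)) * (∑ t, v t)) = 0 := by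
        have hrw : ∀ v : Fin m → ZMod d,
            zchar d ((k * (x - y)) * (∑ t, v t))
            = ∏ t : Fin m, zchar d ((k * (x - y)) * v t) := by
          intro v
          rw [Finset.mul_sum, zchar_map_sum]
        rw [Finset.sum_congr rfl fun v _ => hrw v]
        rw [← Fintype.prod_sum (fun (_ : Fin m) (a : ZMod d) => zchar d ((k * (x - y)) * a))]
        rw [Finset.prod_const, sum_zchar_eq_zero d hd hcne, Finset.card_univ, Fintype.card_fin]
        exact zero_pow (by omega)
      rw [hsum, mul_zero]
      simp [Matrix.one_apply_ne hxy, hxy]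
  refine ⟨h1, ?_⟩
  -- norm part
  set A := PhiCHSH d (m+1) k with hA
  set T := LinearMap.toContinuousLinearMap (Matrix.toEuclideanLin A) with hT
  set T' := ContinuousLinearMap.adjoint T with hT'
  have hTT' : ∀ y, T (T' y) = ((1 : ℂ) / (d : ℂ) ^ (m + 1 + 1)) • y := by
    intro y
    have e1 : T' = LinearMap.toContinuousLinearMap (Matrix.toEuclideanLin Aᴴ) := by
      rw [hT', hT, Matrix.toEuclideanLin_conjTranspose_eq_adjoint,
        LinearMap.adjoint_toContinuousLinearMap]
    rw [e1]
    have e2 : Matrix.toEuclideanLin (A * Aᴴ)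
        = (Matrix.toEuclideanLin A).comp (Matrix.toEuclideanLin Aᴴ) := by
      simp_rw [Matrix.toEuclideanLin_eq_toLin]
      exact Matrix.toLin_mul _ _ _ _ _
    have e3 : Matrix.toEuclideanLin (A * Aᴴ) y = ((1 : ℂ) / (d : ℂ) ^ (m + 1 + 1)) • y := by
      rw [h1, _root_.map_smul]
      simp [Matrix.toEuclideanLin_eq_toLin, Matrix.toLin_one]
    rw [← e3, e2]
    rfl
  have hdR : (0:ℝ) < (d:ℝ) := by exact_mod_cast hd.pos
  have hc0 : (0:ℝ) < 1 / (d : ℝ) ^ (m + 1 + 1) := by positivity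
  have hnorm : ∀ y, ‖T' y‖ = Real.sqrt (1 / (d : ℝ) ^ (m + 1 + 1)) * ‖y‖ := by
    intro y
    have hi : ⟪T' y, T' y⟫_ℂ = ((1 : ℂ) / (d : ℂ) ^ (m + 1 + 1)) * ⟪y, y⟫_ℂ := by
      rw [ContinuousLinearMap.adjoint_inner_left, hTT', inner_smul_right]
    rw [inner_self_eq_norm_sq_to_K, inner_self_eq_norm_sq_to_K] at hi
    have hr : ‖T' y‖^2 = (1 / (d : ℝ) ^ (m + 1 + 1)) * ‖y‖^2 := by
      apply Complex.ofReal_injective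
      push_cast
      exact hi
    have := congrArg Real.sqrt hr
    rwa [Real.sqrt_sq (norm_nonneg _), Real.sqrt_mul hc0.le, Real.sqrt_sq (norm_nonneg _)] at this
  have hTnorm : ‖T'‖ = Real.sqrt (1 / (d : ℝ) ^ (m + 1 + 1)) := by
    refine le_antisymm (ContinuousLinearMap.opNorm_le_bound _ (Real.sqrt_nonneg _)
      fun y => le_of_eq (hnorm y)) ?_
    have hy0 : ‖(EuclideanSpace.single (0 : ZMod d) (1 : ℂ) : EuclideanSpace ℂ (ZMod d))‖ = 1 := by
      rw [EuclideanSpace.norm_single]; norm_num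
    have := ContinuousLinearMap.le_opNorm T' (EuclideanSpace.single (0 : ZMod d) (1 : ℂ))
    rw [hnorm, hy0, mul_one, mul_one] at this
    exact this
  have hadj : ‖T'‖ = ‖T‖ := ContinuousLinearMap.adjoint.norm_map T
  show ‖T‖ = _
  rw [← hadj, hTnorm, one_div, Real.sqrt_inv, one_div]
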